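/- If a₀₂ = -6(3 + a₀₁)/(6 + a₀₁) and a₀₃ = (-36 - 18a₀₁ - 17a₀₂)/6 with a₀₁ > -1, a₀₁ ≠ -6, then the quartic/linear kernel S⁴_{4/1} is twice continuously differentiable on ℝ (C² continuous). -/

import Mathlib

open Set Filter Topology

noncomputable def S44 (a1 a2 a3 t : ℝ) : ℝ :=
  if |t| < 1 then
    (1 - |t|) * (1 + (1 + a1) * |t| + (1 + a1 + a2) * |t| ^ 2 +
      (1 + a1 + a2 + a3) * |t| ^ 3) / (1 + a1 * |t|)
  else if |t| < 2 then
    (1 - |t|) * (2 - |t|) ^ 2 *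
      ((5 - a1 - 3 * a1 ^ 2 + 3 * a2 - 3 * a1 * a2 + 2 * a3 - a1 * a3) +
        (-1 + 4 * a1 + 3 * a1 ^ 2 - a2 + 3 * a1 * a2 - a3 + a1 * a3) * |t|) /
      ((1 + a1) * (1 - a1 + a1 * |t|))
  else 0

/-! ### Generic gluing lemmas -/

lemma hasDerivAt_glue_pt {p q : ℝ → ℝ} {d a : ℝ} (hp : HasDerivAt p d a)
    (hq : HasDerivAt q d a) (e0 : p a = q a) :
    HasDerivAt (fun x => if x < a then p x else q x) d a := by
  have h1 : HasDerivWithinAt (fun x => if x < a then p x else q x) d (Set.Iic a) a := by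
    refine hp.hasDerivWithinAt.congr (fun y hy => ?_) ?_
    · have hy' : y ≤ a := hy
      rcases eq_or_lt_of_le hy' with h | h
      · subst h; rw [if_neg (lt_irrefl y)]; exact e0.symm
      · rw [if_pos h]
    · rw [if_neg (lt_irrefl a)]; exact e0.symm
  have h2 : HasDerivWithinAt (fun x => if x < a then p x else q x) d (Set.Ici a) a := by
    refine hq.hasDerivWithinAt.congr (fun y hy => ?_) ?_
    · have hy' : a ≤ y := hy
      rw [if_neg (not_lt.mpr hy')]
    · rw [if_neg (lt_irrefl a)]
  have h3 := h1.union h2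
  rw [Set.Iic_union_Ici] at h3
  exact hasDerivWithinAt_univ.mp h3

lemma continuousAt_glue_pt {p q : ℝ → ℝ} {a : ℝ} (hp : ContinuousAt p a)
    (hq : ContinuousAt q a) (e0 : p a = q a) :
    ContinuousAt (fun x => if x < a then p x else q x) a := by
  have h1 : ContinuousWithinAt (fun x => if x < a then p x else q x) (Set.Iic a) a := by
    refine hp.continuousWithinAt.congr (fun y hy => ?_) ?_
    · have hy' : y ≤ a := hy
      rcases eq_or_lt_of_le hy' with h | h
      · subst h; rw [if_neg (lt_irrefl y)]; exact e0.symm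
      · rw [if_pos h]
    · rw [if_neg (lt_irrefl a)]; exact e0.symm
  have h2 : ContinuousWithinAt (fun x => if x < a then p x else q x) (Set.Ici a) a := by
    refine hq.continuousWithinAt.congr (fun y hy => ?_) ?_
    · have hy' : a ≤ y := hy
      rw [if_neg (not_lt.mpr hy')]
    · rw [if_neg (lt_irrefl a)]
  have h3 := h1.union h2
  rw [Set.Iic_union_Ici] at h3
  exact continuousWithinAt_univ _ _ |>.mp h3

lemma contDiffAt_glue {p q p' q' p'' q'' : ℝ → ℝ} {a : ℝ} {u : Set ℝ}
    (hu : IsOpen u) (hau : a ∈ u)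
    (hp : ∀ x ∈ u, x ≤ a → HasDerivAt p (p' x) x)
    (hp' : ∀ x ∈ u, x ≤ a → HasDerivAt p' (p'' x) x)
    (hp'' : ∀ x ∈ u, x ≤ a → ContinuousAt p'' x)
    (hq : ∀ x ∈ u, a ≤ x → HasDerivAt q (q' x) x)
    (hq' : ∀ x ∈ u, a ≤ x → HasDerivAt q' (q'' x) x)
    (hq'' : ∀ x ∈ u, a ≤ x → ContinuousAt q'' x)
    (e0 : p a = q a) (e1 : p' a = q' a) (e2 : p'' a = q'' a) :
    ContDiffAt ℝ 2 (fun x => if x < a then p x else q x) a := by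
  have stepA : ∀ x ∈ u, HasDerivAt (fun x => if x < a then p x else q x)
      ((fun x => if x < a then p' x else q' x) x) x := by
    intro x hx
    rcases lt_trichotomy x a with hlt | heq | hgt
    · have h0 : HasDerivAt p (p' x) x := hp x hx hlt.le
      have heq : (fun x => if x < a then p x else q x) =ᶠ[𝓝 x] p := by
        filter_upwards [Iio_mem_nhds hlt] with y hy
        exact if_pos hy
      simpa only [if_pos hlt] using h0.congr_of_eventuallyEq heq
    · subst heq
      have h0 := hasDerivAt_glue_pt (d := q' x) (e1 ▸ hp x hx le_rfl) (hq x hx le_rfl) e0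
      simpa only [if_neg (lt_irrefl x)] using h0
    · have h0 : HasDerivAt q (q' x) x := hq x hx hgt.le
      have heq : (fun x => if x < a then p x else q x) =ᶠ[𝓝 x] q := by
        filter_upwards [Ioi_mem_nhds hgt] with y hy
        exact if_neg (not_lt.mpr hy.le)
      simpa only [if_neg (not_lt.mpr hgt.le)] using h0.congr_of_eventuallyEq heq
  have stepB : ∀ x ∈ u, HasDerivAt (fun x => if x < a then p' x else q' x)
      ((fun x => if x < a then p'' x else q'' x) x) x := by
    intro x hx
    rcases lt_trichotomy x a with hlt | heq | hgt
    · have h0 : HasDerivAt p' (p'' x) x := hp' x hx hlt.le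
      have heq : (fun x => if x < a then p' x else q' x) =ᶠ[𝓝 x] p' := by
        filter_upwards [Iio_mem_nhds hlt] with y hy
        exact if_pos hy
      simpa only [if_pos hlt] using h0.congr_of_eventuallyEq heq
    · subst heq
      have h0 := hasDerivAt_glue_pt (d := q'' x) (e2 ▸ hp' x hx le_rfl) (hq' x hx le_rfl) e1
      simpa only [if_neg (lt_irrefl x)] using h0
    · have h0 : HasDerivAt q' (q'' x) x := hq' x hx hgt.le
      have heq : (fun x => if x < a then p' x else q' x) =ᶠ[𝓝 x] q' := by
        filter_upwards [Ioi_mem_nhds hgt] with y hy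
        exact if_neg (not_lt.mpr hy.le)
      simpa only [if_neg (not_lt.mpr hgt.le)] using h0.congr_of_eventuallyEq heq
  have stepC : ∀ x ∈ u, ContinuousAt (fun x => if x < a then p'' x else q'' x) x := by
    intro x hx
    rcases lt_trichotomy x a with hlt | heq | hgt
    · have heq : (fun x => if x < a then p'' x else q'' x) =ᶠ[𝓝 x] p'' := by
        filter_upwards [Iio_mem_nhds hlt] with y hy
        exact if_pos hy
      exact (hp'' x hx hlt.le).congr heq.symm
    · subst heq
      exact continuousAt_glue_pt (hp'' x hx le_rfl) (hq'' x hx le_rfl) e2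
    · have heq : (fun x => if x < a then p'' x else q'' x) =ᶠ[𝓝 x] q'' := by
        filter_upwards [Ioi_mem_nhds hgt] with y hy
        exact if_neg (not_lt.mpr hy.le)
      exact (hq'' x hx hgt.le).congr heq.symm
  have key : ContDiffOn ℝ 2 (fun x => if x < a then p x else q x) u := by
    rw [show (2 : WithTop ℕ∞) = 1 + 1 from rfl, contDiffOn_succ_iff_deriv_of_isOpen hu]
    refine ⟨fun x hx => (stepA x hx).differentiableAt.differentiableWithinAt, by simp, ?_⟩
    refine ContDiffOn.congr ?_ (fun x hx => (stepA x hx).deriv)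
    rw [show (1 : WithTop ℕ∞) = 0 + 1 from rfl, contDiffOn_succ_iff_deriv_of_isOpen hu]
    refine ⟨fun x hx => (stepB x hx).differentiableAt.differentiableWithinAt, by simp, ?_⟩
    refine ContDiffOn.congr ?_ (fun x hx => (stepB x hx).deriv)
    exact contDiffOn_zero.mpr (fun x hx => (stepC x hx).continuousWithinAt)
  exact key.contDiffAt (hu.mem_nhds hau)

lemma hasDerivAt_quartic (c0 c1 c2 c3 c4 x : ℝ) :
    HasDerivAt (fun t : ℝ => c0 + c1*t + c2*t^2 + c3*t^3 + c4*t^4)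
      (c1 + 2*c2*x + 3*c3*x^2 + 4*c4*x^3) x := by
  have h := ((((hasDerivAt_const x c0).add ((hasDerivAt_id' (x := x)).const_mul c1)).add
    ((hasDerivAt_pow 2 x).const_mul c2)).add ((hasDerivAt_pow 3 x).const_mul c3)).add
    ((hasDerivAt_pow 4 x).const_mul c4)
  refine h.congr_deriv ?_; push_cast; ring

lemma hasDerivAt_cubic (c0 c1 c2 c3 x : ℝ) :
    HasDerivAt (fun t : ℝ => c0 + c1*t + c2*t^2 + c3*t^3)
      (c1 + 2*c2*x + 3*c3*x^2) x := by
  have h := (((hasDerivAt_const x c0).add ((hasDerivAt_id' (x := x)).const_mul c1)).add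
    ((hasDerivAt_pow 2 x).const_mul c2)).add ((hasDerivAt_pow 3 x).const_mul c3)
  refine h.congr_deriv ?_; push_cast; ring

lemma contDiffAt_cube : ContDiffAt ℝ 2 (fun t : ℝ => t^2 * |t|) 0 := by
  have hp : ∀ x : ℝ, HasDerivAt (fun t : ℝ => -t^3) (-(3*x^2)) x := by
    intro x
    have := (hasDerivAt_pow 3 x).neg
    refine this.congr_deriv ?_; push_cast; ring
  have hq : ∀ x : ℝ, HasDerivAt (fun t : ℝ => t^3) (3*x^2) x := by
    intro x
    have := hasDerivAt_pow 3 x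
    refine this.congr_deriv ?_; push_cast; ring
  have hp' : ∀ x : ℝ, HasDerivAt (fun t : ℝ => -(3*t^2)) (-(6*x)) x := by
    intro x
    have := ((hasDerivAt_pow 2 x).const_mul 3).neg
    refine this.congr_deriv ?_; push_cast; ring
  have hq' : ∀ x : ℝ, HasDerivAt (fun t : ℝ => 3*t^2) (6*x) x := by
    intro x
    have := (hasDerivAt_pow 2 x).const_mul 3
    refine this.congr_deriv ?_; push_cast; ring
  have h := contDiffAt_glue (p := fun t : ℝ => -t^3) (q := fun t : ℝ => t^3)
    (p' := fun t => -(3*t^2)) (q' := fun t => 3*t^2)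
    (p'' := fun t => -(6*t)) (q'' := fun t => 6*t)
    (a := 0) (u := Set.univ) isOpen_univ (Set.mem_univ 0)
    (fun x _ _ => hp x) (fun x _ _ => hp' x) (fun x _ _ => by fun_prop)
    (fun x _ _ => hq x) (fun x _ _ => hq' x) (fun x _ _ => by fun_prop)
    (by norm_num) (by norm_num) (by norm_num)
  refine h.congr_of_eventuallyEq (Filter.Eventually.of_forall fun t => ?_)
  show t^2 * |t| = if t < 0 then -t^3 else t^3
  rcases lt_or_ge t 0 with ht | ht
  · rw [if_pos ht, abs_of_neg ht]; ring
  · rw [if_neg (not_lt.mpr ht), abs_of_nonneg ht]; ring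

/-! ### The two pieces, expanded, and their derivatives -/

noncomputable def N1f (a1 a2 a3 t : ℝ) : ℝ :=
  1 + a1*t + a2*t^2 + a3*t^3 + (-(1+a1+a2+a3))*t^4

noncomputable def N1df (a1 a2 a3 x : ℝ) : ℝ :=
  a1 + 2*a2*x + 3*a3*x^2 + 4*(-(1+a1+a2+a3))*x^3

noncomputable def N1ddf (a1 a2 a3 x : ℝ) : ℝ :=
  2*a2 + 2*(3*a3)*x + 3*(4*(-(1+a1+a2+a3)))*x^2

noncomputable def f1 (a1 a2 a3 t : ℝ) : ℝ := N1f a1 a2 a3 t / (1 + a1*t)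

noncomputable def f1d (a1 a2 a3 x : ℝ) : ℝ :=
  (N1df a1 a2 a3 x * (1 + a1*x) - N1f a1 a2 a3 x * a1) / (1 + a1*x)^2

noncomputable def f1dd (a1 a2 a3 x : ℝ) : ℝ :=
  (N1ddf a1 a2 a3 x * (1 + a1*x)^2 - 2*a1*(N1df a1 a2 a3 x)*(1 + a1*x)
    + 2*a1^2*(N1f a1 a2 a3 x)) / (1 + a1*x)^3

noncomputable def Ac (a1 a2 a3 : ℝ) : ℝ :=
  5 - a1 - 3*a1^2 + 3*a2 - 3*a1*a2 + 2*a3 - a1*a3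

noncomputable def Bc (a1 a2 a3 : ℝ) : ℝ :=
  -1 + 4*a1 + 3*a1^2 - a2 + 3*a1*a2 - a3 + a1*a3

noncomputable def N2f (a1 a2 a3 t : ℝ) : ℝ :=
  4*Ac a1 a2 a3 + (4*Bc a1 a2 a3 - 8*Ac a1 a2 a3)*t + (5*Ac a1 a2 a3 - 8*Bc a1 a2 a3)*t^2
    + (5*Bc a1 a2 a3 - Ac a1 a2 a3)*t^3 + (-Bc a1 a2 a3)*t^4

noncomputable def N2df (a1 a2 a3 x : ℝ) : ℝ :=
  4*Bc a1 a2 a3 - 8*Ac a1 a2 a3 + 2*(5*Ac a1 a2 a3 - 8*Bc a1 a2 a3)*x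
    + 3*(5*Bc a1 a2 a3 - Ac a1 a2 a3)*x^2 + 4*(-Bc a1 a2 a3)*x^3

noncomputable def N2ddf (a1 a2 a3 x : ℝ) : ℝ :=
  2*(5*Ac a1 a2 a3 - 8*Bc a1 a2 a3) + 2*(3*(5*Bc a1 a2 a3 - Ac a1 a2 a3))*x
    + 3*(4*(-Bc a1 a2 a3))*x^2

noncomputable def D2f (a1 t : ℝ) : ℝ := (1 + a1) * (1 - a1 + a1*t)

noncomputable def f2 (a1 a2 a3 t : ℝ) : ℝ := N2f a1 a2 a3 t / D2f a1 t

noncomputable def f2d (a1 a2 a3 x : ℝ) : ℝ :=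
  (N2df a1 a2 a3 x * D2f a1 x - N2f a1 a2 a3 x * ((1+a1)*a1)) / D2f a1 x^2

noncomputable def f2dd (a1 a2 a3 x : ℝ) : ℝ :=
  (N2ddf a1 a2 a3 x * D2f a1 x^2 - 2*((1+a1)*a1)*(N2df a1 a2 a3 x)*(D2f a1 x)
    + 2*((1+a1)*a1)^2*(N2f a1 a2 a3 x)) / D2f a1 x^3

lemma hasDerivAt_D1 (a1 x : ℝ) : HasDerivAt (fun t : ℝ => 1 + a1*t) a1 x := by
  simpa using ((hasDerivAt_id' (x := x)).const_mul a1).const_add 1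

lemma hasDerivAt_D2 (a1 x : ℝ) : HasDerivAt (D2f a1) ((1+a1)*a1) x := by
  unfold D2f
  have h : HasDerivAt (fun t : ℝ => 1 - a1 + a1*t) a1 x := by
    simpa using ((hasDerivAt_id' (x := x)).const_mul a1).const_add (1 - a1)
  exact h.const_mul (1 + a1)

lemma hasDerivAt_N1 (a1 a2 a3 x : ℝ) :
    HasDerivAt (N1f a1 a2 a3) (N1df a1 a2 a3 x) x := by
  unfold N1f N1df
  exact hasDerivAt_quartic 1 a1 a2 a3 (-(1+a1+a2+a3)) x

lemma hasDerivAt_N1d (a1 a2 a3 x : ℝ) :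
    HasDerivAt (N1df a1 a2 a3) (N1ddf a1 a2 a3 x) x := by
  unfold N1df N1ddf
  exact hasDerivAt_cubic a1 (2*a2) (3*a3) (4*(-(1+a1+a2+a3))) x

lemma hasDerivAt_N2 (a1 a2 a3 x : ℝ) :
    HasDerivAt (N2f a1 a2 a3) (N2df a1 a2 a3 x) x := by
  unfold N2f N2df
  exact hasDerivAt_quartic (4*Ac a1 a2 a3) (4*Bc a1 a2 a3 - 8*Ac a1 a2 a3)
    (5*Ac a1 a2 a3 - 8*Bc a1 a2 a3) (5*Bc a1 a2 a3 - Ac a1 a2 a3) (-Bc a1 a2 a3) x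

lemma hasDerivAt_N2d (a1 a2 a3 x : ℝ) :
    HasDerivAt (N2df a1 a2 a3) (N2ddf a1 a2 a3 x) x := by
  unfold N2df N2ddf
  exact hasDerivAt_cubic (4*Bc a1 a2 a3 - 8*Ac a1 a2 a3) (2*(5*Ac a1 a2 a3 - 8*Bc a1 a2 a3))
    (3*(5*Bc a1 a2 a3 - Ac a1 a2 a3)) (4*(-Bc a1 a2 a3)) x

lemma hasDerivAt_f1 (a1 a2 a3 x : ℝ) (hx : 1 + a1*x ≠ 0) :
    HasDerivAt (f1 a1 a2 a3) (f1d a1 a2 a3 x) x := by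
  unfold f1 f1d
  exact (hasDerivAt_N1 a1 a2 a3 x).div (hasDerivAt_D1 a1 x) hx

lemma hasDerivAt_f1d (a1 a2 a3 x : ℝ) (hx : 1 + a1*x ≠ 0) :
    HasDerivAt (f1d a1 a2 a3) (f1dd a1 a2 a3 x) x := by
  unfold f1d f1dd
  have hnum := ((hasDerivAt_N1d a1 a2 a3 x).mul (hasDerivAt_D1 a1 x)).sub
    ((hasDerivAt_N1 a1 a2 a3 x).mul_const a1)
  have hden := (hasDerivAt_D1 a1 x).pow 2
  have h := hnum.div hden (pow_ne_zero 2 hx)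
  refine h.congr_deriv ?_
  simp only [Pi.pow_apply, Pi.sub_apply, Pi.mul_apply]
  field_simp
  ring

lemma hasDerivAt_f2 (a1 a2 a3 x : ℝ) (hx : D2f a1 x ≠ 0) :
    HasDerivAt (f2 a1 a2 a3) (f2d a1 a2 a3 x) x := by
  unfold f2 f2d
  exact (hasDerivAt_N2 a1 a2 a3 x).div (hasDerivAt_D2 a1 x) hx

lemma hasDerivAt_f2d (a1 a2 a3 x : ℝ) (hx : D2f a1 x ≠ 0) :
    HasDerivAt (f2d a1 a2 a3) (f2dd a1 a2 a3 x) x := by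
  unfold f2d f2dd
  have hnum := ((hasDerivAt_N2d a1 a2 a3 x).mul (hasDerivAt_D2 a1 x)).sub
    ((hasDerivAt_N2 a1 a2 a3 x).mul_const ((1+a1)*a1))
  have hden := (hasDerivAt_D2 a1 x).pow 2
  have h := hnum.div hden (pow_ne_zero 2 hx)
  refine h.congr_deriv ?_
  simp only [Pi.pow_apply, Pi.sub_apply, Pi.mul_apply]
  field_simp
  ring

lemma continuousAt_f1dd (a1 a2 a3 x : ℝ) (hx : 1 + a1*x ≠ 0) :
    ContinuousAt (f1dd a1 a2 a3) x := by
  unfold f1dd N1ddf N1df N1f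
  exact ContinuousAt.div (by fun_prop) (by fun_prop) (pow_ne_zero 3 hx)

lemma continuousAt_f2dd (a1 a2 a3 x : ℝ) (hx : D2f a1 x ≠ 0) :
    ContinuousAt (f2dd a1 a2 a3) x := by
  unfold f2dd N2ddf N2df N2f D2f
  unfold D2f at hx
  exact ContinuousAt.div (by fun_prop) (by fun_prop) (pow_ne_zero 3 hx)

lemma contDiffAt_f1 (a1 a2 a3 x : ℝ) (hx : 1 + a1*x ≠ 0) :
    ContDiffAt ℝ 2 (f1 a1 a2 a3) x := by
  unfold f1 N1f
  exact ContDiffAt.div (by fun_prop) (by fun_prop) hx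

lemma contDiffAt_f2 (a1 a2 a3 x : ℝ) (hx : D2f a1 x ≠ 0) :
    ContDiffAt ℝ 2 (f2 a1 a2 a3) x := by
  unfold f2 N2f D2f
  unfold D2f at hx
  exact ContDiffAt.div (by fun_prop) (by fun_prop) hx

lemma D1_pos {a1 s : ℝ} (ha1 : -1 < a1) (h0 : 0 ≤ s) (h2 : s ≤ 1) : 0 < 1 + a1*s := by
  rcases eq_or_lt_of_le h2 with h | h
  · subst h; nlinarith
  · nlinarith [mul_nonneg (le_of_lt (by linarith : (0:ℝ) < 1 + a1)) h0]

lemma D2_pos {a1 s : ℝ} (ha1 : -1 < a1) (h1 : 1 ≤ s) (h2 : s ≤ 2) : 0 < D2f a1 s := by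
  unfold D2f
  have hin : 0 < 1 - a1 + a1*s := by
    rcases le_or_gt a1 0 with h | h
    · nlinarith [mul_nonneg (neg_nonneg.mpr h) (by linarith : (0:ℝ) ≤ 2 - s)]
    · nlinarith [mul_nonneg h.le (by linarith : (0:ℝ) ≤ s - 1)]
  exact mul_pos (by linarith) hin

section
variable {a1 a2 a3 : ℝ}

lemma If1_one : f1 a1 a2 a3 1 = 0 := by
  unfold f1 N1f
  rw [show (1:ℝ) + a1*1 + a2*1^2 + a3*1^3 + (-(1+a1+a2+a3))*1^4 = 0 from by ring, zero_div]

lemma If2_one : f2 a1 a2 a3 1 = 0 := by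
  unfold f2 N2f
  rw [show (4*Ac a1 a2 a3 + (4*Bc a1 a2 a3 - 8*Ac a1 a2 a3)*1 + (5*Ac a1 a2 a3 - 8*Bc a1 a2 a3)*1^2
    + (5*Bc a1 a2 a3 - Ac a1 a2 a3)*1^3 + (-Bc a1 a2 a3)*1^4 : ℝ) = 0 from by ring, zero_div]

lemma If2_two : f2 a1 a2 a3 2 = 0 := by
  unfold f2 N2f
  rw [show (4*Ac a1 a2 a3 + (4*Bc a1 a2 a3 - 8*Ac a1 a2 a3)*2 + (5*Ac a1 a2 a3 - 8*Bc a1 a2 a3)*2^2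
    + (5*Bc a1 a2 a3 - Ac a1 a2 a3)*2^3 + (-Bc a1 a2 a3)*2^4 : ℝ) = 0 from by ring, zero_div]

set_option maxHeartbeats 1000000 in
lemma I1 (ha1 : -1 < a1) (ha2 : a2 = -6 * (3 + a1) / (6 + a1))
    (ha3 : a3 = (-36 - 18 * a1 - 17 * a2) / 6) :
    f1d a1 a2 a3 1 = f2d a1 a2 a3 1 := by
  subst ha3; subst ha2
  have h1 : (1:ℝ) + a1 ≠ 0 := by linarith
  have h6 : (6:ℝ) + a1 ≠ 0 := by linarith
  unfold f1d f2d N1df N1f N2df N2f D2f Ac Bc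
  have e1 : (1:ℝ) + a1*1 ≠ 0 := by rw [mul_one]; exact h1
  have e2 : (1:ℝ) - a1 + a1*1 ≠ 0 := by rw [mul_one]; simpa using one_ne_zero
  field_simp
  ring

set_option maxHeartbeats 2000000 in
lemma I2 (ha1 : -1 < a1) (ha2 : a2 = -6 * (3 + a1) / (6 + a1))
    (ha3 : a3 = (-36 - 18 * a1 - 17 * a2) / 6) :
    f1dd a1 a2 a3 1 = f2dd a1 a2 a3 1 := by
  subst ha3; subst ha2
  have h1 : (1:ℝ) + a1 ≠ 0 := by linarith
  have h6 : (6:ℝ) + a1 ≠ 0 := by linarith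
  unfold f1dd f2dd N1ddf N1df N1f N2ddf N2df N2f D2f Ac Bc
  have e1 : (1:ℝ) + a1*1 ≠ 0 := by rw [mul_one]; exact h1
  have e2 : (1:ℝ) - a1 + a1*1 ≠ 0 := by rw [mul_one]; simpa using one_ne_zero
  field_simp
  ring

set_option maxHeartbeats 1000000 in
lemma I3b (ha1 : -1 < a1) (ha2 : a2 = -6 * (3 + a1) / (6 + a1))
    (ha3 : a3 = (-36 - 18 * a1 - 17 * a2) / 6) :
    f2d a1 a2 a3 2 = 0 := by
  subst ha3; subst ha2
  have h1 : (1:ℝ) + a1 ≠ 0 := by linarith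
  have h6 : (6:ℝ) + a1 ≠ 0 := by linarith
  unfold f2d N2df N2f D2f Ac Bc
  have e2 : (1:ℝ) - a1 + a1*2 ≠ 0 := by intro h; apply h1; linarith
  field_simp
  ring

set_option maxHeartbeats 2000000 in
lemma I3c (ha1 : -1 < a1) (ha2 : a2 = -6 * (3 + a1) / (6 + a1))
    (ha3 : a3 = (-36 - 18 * a1 - 17 * a2) / 6) :
    f2dd a1 a2 a3 2 = 0 := by
  subst ha3; subst ha2
  have h1 : (1:ℝ) + a1 ≠ 0 := by linarith
  have h6 : (6:ℝ) + a1 ≠ 0 := by linarith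
  unfold f2dd N2ddf N2df N2f D2f Ac Bc
  have e2 : (1:ℝ) - a1 + a1*2 ≠ 0 := by intro h; apply h1; linarith
  field_simp
  ring

end


theorem S44_C2 (a1 a2 a3 : ℝ) (ha1 : -1 < a1) (hne : a1 ≠ -6)
    (ha2 : a2 = -6 * (3 + a1) / (6 + a1))
    (ha3 : a3 = (-36 - 18 * a1 - 17 * a2) / 6) :
    ContDiff ℝ 2 (S44 a1 a2 a3) := by
  have i1 := I1 ha1 ha2 ha3
  have i2 := I2 ha1 ha2 ha3
  have i3b := I3b ha1 ha2 ha3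
  have i3c := I3c ha1 ha2 ha3
  clear hne ha2 ha3
  have habs : ∀ y : ℝ, S44 a1 a2 a3 y = S44 a1 a2 a3 (-y) := by
    intro y; simp only [S44, abs_neg]
  have hS1 : ∀ y : ℝ, 0 < y → y < 1 → S44 a1 a2 a3 y = f1 a1 a2 a3 y := by
    intro y h0 h1'
    have hy : |y| = y := abs_of_pos h0
    simp only [S44, hy, if_pos h1']
    unfold f1
    rw [show (1 - y) * (1 + (1 + a1) * y + (1 + a1 + a2) * y ^ 2 + (1 + a1 + a2 + a3) * y ^ 3)
      = N1f a1 a2 a3 y from by unfold N1f; ring]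
  have hS2 : ∀ y : ℝ, 1 ≤ y → y < 2 → S44 a1 a2 a3 y = f2 a1 a2 a3 y := by
    intro y h1' h2'
    have hy : |y| = y := abs_of_pos (by linarith)
    simp only [S44, hy, if_neg (not_lt.mpr h1'), if_pos h2']
    unfold f2 D2f
    rw [show (1 - y) * (2 - y) ^ 2 *
      ((5 - a1 - 3 * a1 ^ 2 + 3 * a2 - 3 * a1 * a2 + 2 * a3 - a1 * a3) +
        (-1 + 4 * a1 + 3 * a1 ^ 2 - a2 + 3 * a1 * a2 - a3 + a1 * a3) * y)
      = N2f a1 a2 a3 y from by unfold N2f Ac Bc; ring]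
  have hS0 : ∀ y : ℝ, 2 ≤ y → S44 a1 a2 a3 y = 0 := by
    intro y h2'
    have hy : |y| = y := abs_of_pos (by linarith)
    simp only [S44, hy, if_neg (not_lt.mpr (by linarith : (1:ℝ) ≤ y)),
      if_neg (not_lt.mpr h2')]
  rw [contDiff_iff_contDiffAt]
  intro x
  rcases lt_trichotomy x (-2) with hx | hx | hx
  · -- x < -2
    refine (contDiffAt_const (c := (0:ℝ))).congr_of_eventuallyEq ?_
    filter_upwards [Iio_mem_nhds hx] with y hy
    rw [habs y]; exact hS0 (-y) (by linarith [mem_Iio.mp hy])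
  · -- x = -2
    subst hx
    have hglue := contDiffAt_glue (a := (-2:ℝ)) (u := Ioo (-3:ℝ) (-1))
      (p := fun _ => (0:ℝ)) (p' := fun _ => (0:ℝ)) (p'' := fun _ => (0:ℝ))
      (q := fun y => f2 a1 a2 a3 (-y)) (q' := fun y => f2d a1 a2 a3 (-y) * (-1))
      (q'' := fun y => f2dd a1 a2 a3 (-y) * (-1) * (-1))
      isOpen_Ioo (by norm_num)
      (fun y _ _ => hasDerivAt_const y 0) (fun y _ _ => hasDerivAt_const y 0)
      (fun y _ _ => continuousAt_const)
      (fun y hy hy2 => (hasDerivAt_f2 a1 a2 a3 (-y)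
        (ne_of_gt (D2_pos ha1 (by linarith [hy.2]) (by linarith)))).comp y (hasDerivAt_neg' (x := y)))
      (fun y hy hy2 => ((hasDerivAt_f2d a1 a2 a3 (-y)
        (ne_of_gt (D2_pos ha1 (by linarith [hy.2]) (by linarith)))).comp y (hasDerivAt_neg' (x := y))).mul_const (-1))
      (fun y hy hy2 => (((continuousAt_f2dd a1 a2 a3 (-y)
        (ne_of_gt (D2_pos ha1 (by linarith [hy.2]) (by linarith)))).comp
        (continuousAt_id.neg)).mul continuousAt_const).mul continuousAt_const)
      (by norm_num [If2_two]) (by norm_num [i3b]) (by norm_num [i3c])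
    refine hglue.congr_of_eventuallyEq ?_
    filter_upwards [Ioo_mem_nhds (by norm_num : (-5/2:ℝ) < -2) (by norm_num : (-2:ℝ) < -3/2)]
      with y hy
    show S44 a1 a2 a3 y = if y < -2 then (0:ℝ) else f2 a1 a2 a3 (-y)
    rcases lt_trichotomy y (-2) with h' | h' | h'
    · rw [if_pos h', habs y]; exact hS0 (-y) (by linarith)
    · rw [h', if_neg (lt_irrefl _), habs (-2), show (-(-2:ℝ)) = 2 by norm_num,
        hS0 2 le_rfl, If2_two]
    · rw [if_neg (not_lt.mpr h'.le), habs y]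
      exact hS2 (-y) (by linarith [hy.2]) (by linarith)
  rcases lt_trichotomy x (-1) with hx1 | hx1 | hx1
  · -- -2 < x < -1
    have hd : D2f a1 (-x) ≠ 0 := ne_of_gt (D2_pos ha1 (by linarith) (by linarith))
    refine (ContDiffAt.comp x (contDiffAt_f2 a1 a2 a3 (-x) hd)
      (contDiffAt_id.neg)).congr_of_eventuallyEq ?_
    filter_upwards [Ioo_mem_nhds hx hx1] with y hy
    show S44 a1 a2 a3 y = f2 a1 a2 a3 (-y)
    rw [habs y]; exact hS2 (-y) (by linarith [hy.2]) (by linarith [hy.1])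
  · -- x = -1
    subst hx1
    have hglue := contDiffAt_glue (a := (-1:ℝ)) (u := Ioo (-3/2:ℝ) (-1/2))
      (p := fun y => f2 a1 a2 a3 (-y)) (p' := fun y => f2d a1 a2 a3 (-y) * (-1))
      (p'' := fun y => f2dd a1 a2 a3 (-y) * (-1) * (-1))
      (q := fun y => f1 a1 a2 a3 (-y)) (q' := fun y => f1d a1 a2 a3 (-y) * (-1))
      (q'' := fun y => f1dd a1 a2 a3 (-y) * (-1) * (-1))
      isOpen_Ioo (by norm_num)
      (fun y hy hy2 => (hasDerivAt_f2 a1 a2 a3 (-y)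
        (ne_of_gt (D2_pos ha1 (by linarith) (by linarith [hy.1])))).comp y (hasDerivAt_neg' (x := y)))
      (fun y hy hy2 => ((hasDerivAt_f2d a1 a2 a3 (-y)
        (ne_of_gt (D2_pos ha1 (by linarith) (by linarith [hy.1])))).comp y (hasDerivAt_neg' (x := y))).mul_const (-1))
      (fun y hy hy2 => (((continuousAt_f2dd a1 a2 a3 (-y)
        (ne_of_gt (D2_pos ha1 (by linarith) (by linarith [hy.1])))).comp
        (continuousAt_id.neg)).mul continuousAt_const).mul continuousAt_const)
      (fun y hy hy2 => (hasDerivAt_f1 a1 a2 a3 (-y)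
        (ne_of_gt (D1_pos ha1 (by linarith [hy.2]) (by linarith)))).comp y (hasDerivAt_neg' (x := y)))
      (fun y hy hy2 => ((hasDerivAt_f1d a1 a2 a3 (-y)
        (ne_of_gt (D1_pos ha1 (by linarith [hy.2]) (by linarith)))).comp y (hasDerivAt_neg' (x := y))).mul_const (-1))
      (fun y hy hy2 => (((continuousAt_f1dd a1 a2 a3 (-y)
        (ne_of_gt (D1_pos ha1 (by linarith [hy.2]) (by linarith)))).comp
        (continuousAt_id.neg)).mul continuousAt_const).mul continuousAt_const)
      (by norm_num [If1_one, If2_one]) (by norm_num [i1]) (by norm_num [i2])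
    refine hglue.congr_of_eventuallyEq ?_
    filter_upwards [Ioo_mem_nhds (by norm_num : (-3/2:ℝ) < -1) (by norm_num : (-1:ℝ) < -1/2)]
      with y hy
    show S44 a1 a2 a3 y = if y < -1 then f2 a1 a2 a3 (-y) else f1 a1 a2 a3 (-y)
    rcases lt_trichotomy y (-1) with h' | h' | h'
    · rw [if_pos h', habs y]; exact hS2 (-y) (by linarith) (by linarith [hy.1])
    · rw [h', if_neg (lt_irrefl _), show (-(-1:ℝ)) = 1 by norm_num, If1_one,
        habs (-1), show (-(-1:ℝ)) = 1 by norm_num, hS2 1 le_rfl one_lt_two, If2_one]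
    · rw [if_neg (not_lt.mpr h'.le), habs y]
      exact hS1 (-y) (by linarith [hy.2]) (by linarith)
  rcases lt_trichotomy x 0 with hx0 | hx0 | hx0
  · -- -1 < x < 0
    have hd : 1 + a1 * (-x) ≠ 0 := ne_of_gt (D1_pos ha1 (by linarith) (by linarith))
    refine (ContDiffAt.comp x (contDiffAt_f1 a1 a2 a3 (-x) hd)
      (contDiffAt_id.neg)).congr_of_eventuallyEq ?_
    filter_upwards [Ioo_mem_nhds hx1 hx0] with y hy
    show S44 a1 a2 a3 y = f1 a1 a2 a3 (-y)
    rw [habs y]; exact hS1 (-y) (by linarith [hy.2]) (by linarith [hy.1])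
  · -- x = 0
    subst hx0
    have hphi : ContDiffAt ℝ 2 (fun t : ℝ =>
        (1 + (a2 - a1^2)*t^2 + (-(1+a1+a2+a3) - a1*a3)*(t^2*t^2)
          + ((a3 - a1*a2) + a1*(1+a1+a2+a3)*t^2) * (t^2*|t|)) / (1 - a1^2*t^2)) 0 := by
      refine ContDiffAt.div ?_ (by fun_prop) (by norm_num)
      exact ContDiffAt.add (by fun_prop) (ContDiffAt.mul (by fun_prop) contDiffAt_cube)
    refine hphi.congr_of_eventuallyEq ?_
    filter_upwards [Metric.ball_mem_nhds (0:ℝ) (show (0:ℝ) < 1/(1+|a1|) by positivity)]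
      with y hy
    rw [Metric.mem_ball, Real.dist_eq, sub_zero] at hy
    have hkey : |y| * (1 + |a1|) < 1 := (lt_div_iff₀ (by positivity)).mp hy
    have hs1 : |y| < 1 := by nlinarith [abs_nonneg a1, abs_nonneg y]
    have h1q : 0 < 1 + a1*|y| := by
      nlinarith [mul_le_mul_of_nonneg_right (neg_abs_le a1) (abs_nonneg y), abs_nonneg y]
    have h2q : 0 < 1 - a1*|y| := by
      nlinarith [mul_le_mul_of_nonneg_right (le_abs_self a1) (abs_nonneg y), abs_nonneg y]
    simp only [S44, if_pos hs1]
    rw [← sq_abs y]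
    have hden : 1 - a1^2*|y|^2 ≠ 0 := by
      rw [show 1 - a1^2*|y|^2 = (1+a1*|y|)*(1-a1*|y|) from by ring]
      exact ne_of_gt (mul_pos h1q h2q)
    rw [div_eq_div_iff (by rw [show 1 + a1*|y| = 1 + a1*|y| from rfl]; exact ne_of_gt h1q) hden]
    ring
  rcases lt_trichotomy x 1 with hx2 | hx2 | hx2
  · -- 0 < x < 1
    have hd : 1 + a1 * x ≠ 0 := ne_of_gt (D1_pos ha1 hx0.le hx2.le)
    refine (contDiffAt_f1 a1 a2 a3 x hd).congr_of_eventuallyEq ?_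
    filter_upwards [Ioo_mem_nhds hx0 hx2] with y hy
    exact hS1 y hy.1 hy.2
  · -- x = 1
    subst hx2
    have hglue := contDiffAt_glue (a := (1:ℝ)) (u := Ioo (1/2:ℝ) (3/2))
      (p := f1 a1 a2 a3) (p' := f1d a1 a2 a3) (p'' := f1dd a1 a2 a3)
      (q := f2 a1 a2 a3) (q' := f2d a1 a2 a3) (q'' := f2dd a1 a2 a3)
      isOpen_Ioo (by norm_num)
      (fun y hy hy2 => hasDerivAt_f1 a1 a2 a3 y
        (ne_of_gt (D1_pos ha1 (by linarith [hy.1]) hy2)))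
      (fun y hy hy2 => hasDerivAt_f1d a1 a2 a3 y
        (ne_of_gt (D1_pos ha1 (by linarith [hy.1]) hy2)))
      (fun y hy hy2 => continuousAt_f1dd a1 a2 a3 y
        (ne_of_gt (D1_pos ha1 (by linarith [hy.1]) hy2)))
      (fun y hy hy2 => hasDerivAt_f2 a1 a2 a3 y
        (ne_of_gt (D2_pos ha1 hy2 (by linarith [hy.2]))))
      (fun y hy hy2 => hasDerivAt_f2d a1 a2 a3 y
        (ne_of_gt (D2_pos ha1 hy2 (by linarith [hy.2]))))
      (fun y hy hy2 => continuousAt_f2dd a1 a2 a3 y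
        (ne_of_gt (D2_pos ha1 hy2 (by linarith [hy.2]))))
      (If1_one.trans If2_one.symm) i1 i2
    refine hglue.congr_of_eventuallyEq ?_
    filter_upwards [Ioo_mem_nhds (by norm_num : (1/2:ℝ) < 1) (by norm_num : (1:ℝ) < 3/2)]
      with y hy
    show S44 a1 a2 a3 y = if y < 1 then f1 a1 a2 a3 y else f2 a1 a2 a3 y
    rcases lt_or_ge y 1 with h' | h'
    · rw [if_pos h']; exact hS1 y (by linarith [hy.1]) h'
    · rw [if_neg (not_lt.mpr h')]; exact hS2 y h' (by linarith [hy.2])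
  rcases lt_trichotomy x 2 with hx3 | hx3 | hx3
  · -- 1 < x < 2
    have hd : D2f a1 x ≠ 0 := ne_of_gt (D2_pos ha1 hx2.le hx3.le)
    refine (contDiffAt_f2 a1 a2 a3 x hd).congr_of_eventuallyEq ?_
    filter_upwards [Ioo_mem_nhds hx2 hx3] with y hy
    exact hS2 y hy.1.le hy.2
  · -- x = 2
    subst hx3
    have hglue := contDiffAt_glue (a := (2:ℝ)) (u := Ioo (3/2:ℝ) (5/2))
      (p := f2 a1 a2 a3) (p' := f2d a1 a2 a3) (p'' := f2dd a1 a2 a3)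
      (q := fun _ => (0:ℝ)) (q' := fun _ => (0:ℝ)) (q'' := fun _ => (0:ℝ))
      isOpen_Ioo (by norm_num)
      (fun y hy hy2 => hasDerivAt_f2 a1 a2 a3 y
        (ne_of_gt (D2_pos ha1 (by linarith [hy.1]) hy2)))
      (fun y hy hy2 => hasDerivAt_f2d a1 a2 a3 y
        (ne_of_gt (D2_pos ha1 (by linarith [hy.1]) hy2)))
      (fun y hy hy2 => continuousAt_f2dd a1 a2 a3 y
        (ne_of_gt (D2_pos ha1 (by linarith [hy.1]) hy2)))
      (fun y _ _ => hasDerivAt_const y 0) (fun y _ _ => hasDerivAt_const y 0)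
      (fun y _ _ => continuousAt_const)
      If2_two i3b i3c
    refine hglue.congr_of_eventuallyEq ?_
    filter_upwards [Ioo_mem_nhds (by norm_num : (3/2:ℝ) < 2) (by norm_num : (2:ℝ) < 5/2)]
      with y hy
    show S44 a1 a2 a3 y = if y < 2 then f2 a1 a2 a3 y else (0:ℝ)
    rcases lt_or_ge y 2 with h' | h'
    · rw [if_pos h']; exact hS2 y (by linarith [hy.1]) h'
    · rw [if_neg (not_lt.mpr h')]; exact hS0 y h'
  · -- 2 < x
    refine (contDiffAt_const (c := (0:ℝ))).congr_of_eventuallyEq ?_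
    filter_upwards [Ioi_mem_nhds hx3] with y hy
    exact hS0 y (le_of_lt hy)
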